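/- arXiv:2511.08027 — 2 statements merged into one kernel-verified Lean document; each statement's English description precedes it below -/
import Mathlib

section
/- Let p ∈ [1,∞), and suppose there exist a continuously differentiable V : D → [0,∞), continuous g, r : D × D → ℝ, and constants σ, ω, Γ₁, Γ₂ ≥ 0, c > 0 with σ + ω < 1 such that: (i) ∇V(x)·f(u, x, w) ≤ −c|h(x)|^p + g(u, x) + r(x, w) for all x, u, w ∈ D; (ii) r(x, w) + g(x, w) ≤ cσ|h(x)|^p + cω|h(w)|^p for all x, w ∈ D; (iii) g(u, x) ≤ Γ₁|h(u)|^p + cω|h(x)|^p for all x ∈ D, u ∈ Ω; (iv) r(x, w) ≤ cσ|h(x)|^p + Γ₂|h(w)|^p for all x ∈ D, w ∈ S. Then for every n ∈ ℕ, all continuous inputs u : [0,∞) → Ω and w : [0,∞) → S, every ξ = (ξ_1,…,ξ_n) ∈ D^n, and every solution (x_1,…,x_n) of the string (Σ_n) with these inputs and initial condition ξ, the estimate ‖h∘x_i‖_{[0,t],p} ≤ (Γ₁/(c(1−σ−ω)))^{1/p}‖h∘u‖_{[0,t],p} + (Γ₂/(c(1−σ−ω)))^{1/p}‖h∘w‖_{[0,t],p}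 + ((Σ_{j=1}^{n} V(ξ_j))/(c(1−σ−ω)))^{1/p} holds for all t ≥ 0 and all i = 1,…,n. -/
lemma aux_rpow_add_le {a b q : ℝ} (ha : 0 ≤ a) (hb : 0 ≤ b) (hq0 : 0 ≤ q) (hq1 : q ≤ 1) :
    (a + b) ^ q ≤ a ^ q + b ^ q := by
  lift a to NNReal using ha
  lift b to NNReal using hb
  rw [← NNReal.coe_add, ← NNReal.coe_rpow, ← NNReal.coe_rpow, ← NNReal.coe_rpow,
    ← NNReal.coe_add, NNReal.coe_le_coe]
  exact NNReal.rpow_add_le_add_rpow a b hq0 hq1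

open Finset in
lemma aux_string_sum_bound (mN : ℕ) (a B Dd : ℕ → ℝ) (cσ cω Γ₁ Γ₂ : ℝ)
    (hB0 : B 0 ≤ Γ₁ * a 0 + cω * a 1)
    (hDlast : Dd mN ≤ cσ * a (mN + 1) + Γ₂ * a (mN + 2))
    (hmid : ∀ j < mN, Dd j + B (j + 1) ≤ cσ * a (j + 1) + cω * a (j + 2)) :
    ∑ j ∈ range (mN + 1), (B j + Dd j) ≤
      Γ₁ * a 0 + Γ₂ * a (mN + 2) + (cσ + cω) * ∑ j ∈ range (mN + 1), a (j + 1) := by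
  have h1 : ∑ j ∈ range (mN + 1), (B j + Dd j)
      = B 0 + Dd mN + ∑ j ∈ range mN, (Dd j + B (j + 1)) := by
    rw [Finset.sum_add_distrib, Finset.sum_range_succ' B, Finset.sum_range_succ Dd,
      Finset.sum_add_distrib]
    ring
  have h2 : ∑ j ∈ range mN, (Dd j + B (j + 1))
      ≤ ∑ j ∈ range mN, (cσ * a (j + 1) + cω * a (j + 2)) :=
    Finset.sum_le_sum fun j hj => hmid j (Finset.mem_range.mp hj)
  have hsplit : ∑ j ∈ range mN, (cσ * a (j + 1) + cω * a (j + 2))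
      = cσ * ∑ j ∈ range mN, a (j + 1) + cω * ∑ j ∈ range mN, a (j + 2) := by
    rw [Finset.sum_add_distrib, Finset.mul_sum, Finset.mul_sum]
  have e1 : ∑ j ∈ range (mN + 1), a (j + 1) = ∑ j ∈ range mN, a (j + 1) + a (mN + 1) :=
    Finset.sum_range_succ _ _
  have e2 : ∑ j ∈ range (mN + 1), a (j + 1) = ∑ j ∈ range mN, a (j + 2) + a 1 :=
    Finset.sum_range_succ' _ _
  calc ∑ j ∈ range (mN + 1), (B j + Dd j)
      ≤ B 0 + Dd mN + (cσ * ∑ j ∈ range mN, a (j + 1) + cω * ∑ j ∈ range mN, a (j + 2)) := by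
        rw [h1]; have := h2; rw [hsplit] at this; linarith
    _ ≤ (Γ₁ * a 0 + cω * a 1) + (cσ * a (mN + 1) + Γ₂ * a (mN + 2))
          + (cσ * ∑ j ∈ range mN, a (j + 1) + cω * ∑ j ∈ range mN, a (j + 2)) := by linarith
    _ = Γ₁ * a 0 + Γ₂ * a (mN + 2)
          + (cσ * (∑ j ∈ range mN, a (j + 1) + a (mN + 1))
             + cω * (∑ j ∈ range mN, a (j + 2) + a 1)) := by ring
    _ = Γ₁ * a 0 + Γ₂ * a (mN + 2) + (cσ + cω) * ∑ j ∈ range (mN + 1), a (j + 1) := by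
        rw [← e1, ← e2]; ring

/-- The `L^p` norm of a signal `y` on the interval `[0, t]`:
`‖y‖_{[0,t],p} = (∫_0^t |y(s)|^p ds)^{1/p}`. -/
noncomputable def lpNorm {m : ℕ} (p : ℝ) (y : ℝ → EuclideanSpace ℝ (Fin m)) (t : ℝ) : ℝ :=
  (∫ s in (0:ℝ)..t, ‖y s‖ ^ p) ^ (1 / p)

/-- Theorem 4: component-wise Lyapunov-based sufficient conditions for `L^p`
string stability of a bidirectional string. -/
theorem lyapunov_string_stability {k m : ℕ}
    (D : Set (EuclideanSpace ℝ (Fin k))) (hDopen : IsOpen D) (hD0 : (0 : EuclideanSpace ℝ (Fin k)) ∈ D)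
    (Ω S : Set (EuclideanSpace ℝ (Fin k))) (hΩ : Ω ⊆ D) (hS : S ⊆ D)
    (hΩ0 : (0 : EuclideanSpace ℝ (Fin k)) ∈ Ω) (hS0 : (0 : EuclideanSpace ℝ (Fin k)) ∈ S)
    (h : EuclideanSpace ℝ (Fin k) → EuclideanSpace ℝ (Fin m))
    (hhcont : ContinuousOn h D) (hh0 : h 0 = 0)
    (f : EuclideanSpace ℝ (Fin k) → EuclideanSpace ℝ (Fin k) → EuclideanSpace ℝ (Fin k) →
      EuclideanSpace ℝ (Fin k))
    (hf : LocallyLipschitzOn (D ×ˢ D ×ˢ D)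
      (fun q : EuclideanSpace ℝ (Fin k) × EuclideanSpace ℝ (Fin k) × EuclideanSpace ℝ (Fin k) =>
        f q.1 q.2.1 q.2.2))
    (p : ℝ) (hp : 1 ≤ p)
    (V : EuclideanSpace ℝ (Fin k) → ℝ) (hV : ContDiffOn ℝ 1 V D) (hV0 : ∀ x ∈ D, 0 ≤ V x)
    (g r : EuclideanSpace ℝ (Fin k) → EuclideanSpace ℝ (Fin k) → ℝ)
    (hg : ContinuousOn (fun q : EuclideanSpace ℝ (Fin k) × EuclideanSpace ℝ (Fin k) => g q.1 q.2) (D ×ˢ D))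
    (hr : ContinuousOn (fun q : EuclideanSpace ℝ (Fin k) × EuclideanSpace ℝ (Fin k) => r q.1 q.2) (D ×ˢ D))
    (σ ω Γ₁ Γ₂ c : ℝ) (hσ : 0 ≤ σ) (hω : 0 ≤ ω) (hΓ₁ : 0 ≤ Γ₁) (hΓ₂ : 0 ≤ Γ₂) (hc : 0 < c)
    (hσω : σ + ω < 1)
    -- (4.1): ∇V(x)·f(u,x,w) ≤ −c|h(x)|^p + g(u,x) + r(x,w)
    (H1 : ∀ x ∈ D, ∀ u ∈ D, ∀ w ∈ D,
      fderiv ℝ V x (f u x w) ≤ -c * ‖h x‖ ^ p + g u x + r x w)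
    -- (4.2): r(x,w) + g(x,w) ≤ cσ|h(x)|^p + cω|h(w)|^p
    (H2 : ∀ x ∈ D, ∀ w ∈ D,
      r x w + g x w ≤ c * σ * ‖h x‖ ^ p + c * ω * ‖h w‖ ^ p)
    -- (4.3): g(u,x) ≤ Γ₁|h(u)|^p + cω|h(x)|^p for u ∈ Ω
    (H3 : ∀ x ∈ D, ∀ u ∈ Ω,
      g u x ≤ Γ₁ * ‖h u‖ ^ p + c * ω * ‖h x‖ ^ p)
    -- (4.4): r(x,w) ≤ cσ|h(x)|^p + Γ₂|h(w)|^p for w ∈ S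
    (H4 : ∀ x ∈ D, ∀ w ∈ S,
      r x w ≤ c * σ * ‖h x‖ ^ p + Γ₂ * ‖h w‖ ^ p) :
    -- conclusion: the string estimate (2.2) with the explicit gains of Theorem 4
    ∀ n : ℕ, ∀ u w : ℝ → EuclideanSpace ℝ (Fin k),
      ContinuousOn u (Set.Ici 0) → ContinuousOn w (Set.Ici 0) →
      (∀ t ≥ (0:ℝ), u t ∈ Ω) → (∀ t ≥ (0:ℝ), w t ∈ S) →
      ∀ ξ : ℕ → EuclideanSpace ℝ (Fin k), (∀ i, 1 ≤ i → i ≤ n → ξ i ∈ D) →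
      ∀ x : ℕ → ℝ → EuclideanSpace ℝ (Fin k),
        (∀ t, x 0 t = u t) → (∀ t, x (n + 1) t = w t) →
        (∀ i, 1 ≤ i → i ≤ n →
          (∀ t ≥ (0:ℝ), x i t ∈ D) ∧ x i 0 = ξ i ∧
          (∀ t ≥ (0:ℝ), HasDerivAt (x i) (f (x (i - 1) t) (x i t) (x (i + 1) t)) t)) →
        ∀ i, 1 ≤ i → i ≤ n → ∀ t ≥ (0:ℝ),
          lpNorm p (fun s => h (x i s)) t ≤
            (Γ₁ / (c * (1 - σ - ω))) ^ (1 / p) * lpNorm p (fun s => h (u s)) t +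
            (Γ₂ / (c * (1 - σ - ω))) ^ (1 / p) * lpNorm p (fun s => h (w s)) t +
            ((∑ j ∈ Finset.Icc 1 n, V (ξ j)) / (c * (1 - σ - ω))) ^ (1 / p) := by
  intro n u w huC hwC huΩ hwS ξ hξ x hx0 hxN hsol i hi1 hin t ht
  have hp0 : (0:ℝ) < p := lt_of_lt_of_le one_pos hp
  obtain ⟨mN, rfl⟩ : ∃ mN, n = mN + 1 :=
    ⟨n - 1, (Nat.succ_pred_eq_of_pos (hi1.trans hin)).symm⟩
  obtain ⟨i', rfl⟩ : ∃ i', i = i' + 1 :=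
    ⟨i - 1, (Nat.succ_pred_eq_of_pos hi1).symm⟩
  set K : ℝ := c * (1 - σ - ω) with hKdef
  have hK : 0 < K := mul_pos hc (by linarith)
  have huD : ∀ s ≥ (0:ℝ), u s ∈ D := fun s hs => hΩ (huΩ s hs)
  have hwD : ∀ s ≥ (0:ℝ), w s ∈ D := fun s hs => hS (hwS s hs)
  -- membership in D for all chain indices 0..mN+2
  have hxD : ∀ j ≤ mN + 2, ∀ s ≥ (0:ℝ), x j s ∈ D := by
    intro j hj s hs
    rcases Nat.eq_zero_or_pos j with rfl | hj0
    · rw [hx0]; exact huD s hs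
    · rcases eq_or_lt_of_le hj with rfl | hlt
      · rw [show mN + 2 = mN + 1 + 1 from rfl, hxN]; exact hwD s hs
      · exact (hsol j hj0 (by omega)).1 s hs
  have hderiv : ∀ j, 1 ≤ j → j ≤ mN + 1 → ∀ s ≥ (0:ℝ),
      HasDerivAt (x j) (f (x (j - 1) s) (x j s) (x (j + 1) s)) s :=
    fun j hj1 hj2 => (hsol j hj1 hj2).2.2
  -- continuity of each chain component on [0,∞)
  have hxC : ∀ j ≤ mN + 2, ContinuousOn (x j) (Set.Ici 0) := by
    intro j hj
    rcases Nat.eq_zero_or_pos j with rfl | hj0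
    · exact huC.congr fun s hs => hx0 s
    · rcases eq_or_lt_of_le hj with rfl | hlt
      · exact hwC.congr fun s hs => by rw [show mN + 2 = mN + 1 + 1 from rfl, hxN]
      · exact fun s hs => ((hderiv j hj0 (by omega) s hs).continuousAt).continuousWithinAt
  -- continuity of s ↦ ‖h (z s)‖ ^ p
  have hcomp : ∀ z : ℝ → EuclideanSpace ℝ (Fin k), ContinuousOn z (Set.Ici 0) →
      (∀ s ≥ (0:ℝ), z s ∈ D) →
      ContinuousOn (fun s => ‖h (z s)‖ ^ p) (Set.Ici 0) := by
    intro z hzC hzD s hs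
    have h1 : ContinuousWithinAt (fun s => h (z s)) (Set.Ici 0) s :=
      (hhcont.continuousAt (hDopen.mem_nhds (hzD s hs))).comp_continuousWithinAt (hzC s hs)
    exact (h1.norm).rpow_const (Or.inr hp0.le)
  have haC : ∀ j ≤ mN + 2, ContinuousOn (fun s => ‖h (x j s)‖ ^ p) (Set.Ici 0) :=
    fun j hj => hcomp (x j) (hxC j hj) (hxD j hj)
  -- the Lyapunov sum along the string
  set Wfun : ℝ → ℝ := fun s => ∑ j ∈ Finset.range (mN + 1), V (x (j + 1) s) with hWdef
  set Sfun : ℝ → ℝ := fun s => ∑ j ∈ Finset.range (mN + 1), ‖h (x (j + 1) s)‖ ^ p with hSdef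
  set Afun : ℝ → ℝ := fun s => ‖h (u s)‖ ^ p with hAdef
  set Bfun : ℝ → ℝ := fun s => ‖h (w s)‖ ^ p with hBdef
  set φ : ℝ → ℝ := fun s => (-K) * Sfun s + (Γ₁ * Afun s + Γ₂ * Bfun s) with hφdef
  set W' : ℝ → ℝ := fun s => ∑ j ∈ Finset.range (mN + 1),
      (fderiv ℝ V (x (j + 1) s)) (f (x j s) (x (j + 1) s) (x (j + 2) s)) with hW'def
  -- derivative of Wfun
  have hWd : ∀ s ≥ (0:ℝ), HasDerivAt Wfun (W' s) s := by
    intro s hs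
    apply HasDerivAt.fun_sum
    intro j hj
    have hjm : j < mN + 1 := Finset.mem_range.mp hj
    have hxd := hderiv (j + 1) (by omega) (by omega) s hs
    simp only [Nat.add_sub_cancel] at hxd
    have hVd : DifferentiableAt ℝ V (x (j + 1) s) :=
      (hV.contDiffAt (hDopen.mem_nhds (hxD (j + 1) (by omega) s hs))).differentiableAt one_ne_zero
    exact hVd.hasFDerivAt.comp_hasDerivAt s hxd
  -- the dissipation estimate W' s ≤ φ s
  have hWle : ∀ s ≥ (0:ℝ), W' s ≤ φ s := by
    intro s hs
    have step1 : W' s ≤ ∑ j ∈ Finset.range (mN + 1),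
        (-c * ‖h (x (j + 1) s)‖ ^ p +
          (g (x j s) (x (j + 1) s) + r (x (j + 1) s) (x (j + 2) s))) := by
      apply Finset.sum_le_sum
      intro j hj
      have hjm : j < mN + 1 := Finset.mem_range.mp hj
      have := H1 (x (j + 1) s) (hxD (j + 1) (by omega) s hs)
        (x j s) (hxD j (by omega) s hs) (x (j + 2) s) (hxD (j + 2) (by omega) s hs)
      linarith
    have step2 : ∑ j ∈ Finset.range (mN + 1),
        (g (x j s) (x (j + 1) s) + r (x (j + 1) s) (x (j + 2) s)) ≤
        Γ₁ * ‖h (x 0 s)‖ ^ p + Γ₂ * ‖h (x (mN + 2) s)‖ ^ p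
          + (c * σ + c * ω) * ∑ j ∈ Finset.range (mN + 1), ‖h (x (j + 1) s)‖ ^ p := by
      apply aux_string_sum_bound mN (fun j => ‖h (x j s)‖ ^ p)
        (fun j => g (x j s) (x (j + 1) s)) (fun j => r (x (j + 1) s) (x (j + 2) s))
        (c * σ) (c * ω) Γ₁ Γ₂
      · have hu' : x 0 s = u s := hx0 s
        have := H3 (x 1 s) (hxD 1 (by omega) s hs) (u s) (huΩ s hs)
        simpa [hu'] using this
      · have hw' : x (mN + 2) s = w s := by
          rw [show mN + 2 = mN + 1 + 1 from rfl, hxN]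
        have := H4 (x (mN + 1) s) (hxD (mN + 1) (by omega) s hs) (w s) (hwS s hs)
        simpa [hw'] using this
      · intro j hjm
        exact H2 (x (j + 1) s) (hxD (j + 1) (by omega) s hs)
          (x (j + 2) s) (hxD (j + 2) (by omega) s hs)
    have hsum_split : ∑ j ∈ Finset.range (mN + 1),
        (-c * ‖h (x (j + 1) s)‖ ^ p +
          (g (x j s) (x (j + 1) s) + r (x (j + 1) s) (x (j + 2) s)))
        = -c * Sfun s + ∑ j ∈ Finset.range (mN + 1),
            (g (x j s) (x (j + 1) s) + r (x (j + 1) s) (x (j + 2) s)) := by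
      rw [Finset.sum_add_distrib, ← Finset.mul_sum]
    have hu' : ‖h (x 0 s)‖ ^ p = Afun s := by rw [hAdef, hx0 s]
    have hw' : ‖h (x (mN + 2) s)‖ ^ p = Bfun s := by
      rw [hBdef, show mN + 2 = mN + 1 + 1 from rfl, hxN]
    have : W' s ≤ -c * Sfun s + (Γ₁ * Afun s + Γ₂ * Bfun s
        + (c * σ + c * ω) * Sfun s) := by
      rw [hsum_split] at step1
      rw [hu', hw'] at step2
      have hSfun : ∑ j ∈ Finset.range (mN + 1), ‖h (x (j + 1) s)‖ ^ p = Sfun s := rfl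
      rw [hSfun] at step2
      linarith
    have hEq : -c * Sfun s + (Γ₁ * Afun s + Γ₂ * Bfun s + (c * σ + c * ω) * Sfun s)
        = φ s := by
      simp only [hφdef, hKdef]; ring
    linarith [hEq ▸ this]
  -- continuity facts
  have hAC : ContinuousOn Afun (Set.Ici 0) := hcomp u huC huD
  have hBC : ContinuousOn Bfun (Set.Ici 0) := hcomp w hwC hwD
  have hSC : ContinuousOn Sfun (Set.Ici 0) := by
    apply continuousOn_finset_sum
    intro j hj
    exact haC (j + 1) (by have := Finset.mem_range.mp hj; omega)
  have hφC : ContinuousOn φ (Set.Ici 0) := by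
    exact (continuousOn_const.mul hSC).add
      ((continuousOn_const.mul hAC).add (continuousOn_const.mul hBC))
  have hWC : ContinuousOn Wfun (Set.Ici 0) := by
    apply continuousOn_finset_sum
    intro j hj
    have hjm : j < mN + 1 := Finset.mem_range.mp hj
    intro s hs
    exact ((hV.continuousOn.continuousAt
      (hDopen.mem_nhds (hxD (j + 1) (by omega) s hs))).comp_continuousWithinAt
      ((hxC (j + 1) (by omega)) s hs))
  -- interval integrability helper
  have hII : ∀ z : ℝ → ℝ, ContinuousOn z (Set.Ici 0) → ∀ s ≥ (0:ℝ),
      IntervalIntegrable z MeasureTheory.volume 0 s := by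
    intro z hz s hs
    refine ContinuousOn.intervalIntegrable (hz.mono ?_)
    rw [Set.uIcc_of_le hs]
    exact Set.Icc_subset_Ici_self
  -- main comparison: Wfun t ≤ Wfun 0 + ∫₀ᵗ φ
  have hmain : Wfun t ≤ Wfun 0 + ∫ s in (0:ℝ)..t, φ s := by
    rcases eq_or_lt_of_le ht with rfl | ht0
    · simp
    · set G : ℝ → ℝ := fun s => Wfun s - ∫ r in (0:ℝ)..s, φ r with hGdef
      have hGd : ∀ s ∈ Set.Ioo (0:ℝ) t, HasDerivAt G (W' s - φ s) s := by
        intro s hs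
        have h1 := hWd s hs.1.le
        have hφC' : ContinuousOn φ (Set.Ioi 0) := hφC.mono Set.Ioi_subset_Ici_self
        have h2 : HasDerivAt (fun y => ∫ r in (0:ℝ)..y, φ r) (φ s) s :=
          intervalIntegral.integral_hasDerivAt_right (hII φ hφC s hs.1.le)
            (hφC'.stronglyMeasurableAtFilter isOpen_Ioi s hs.1)
            (hφC'.continuousAt (isOpen_Ioi.mem_nhds hs.1))
        exact h1.sub h2
      have hGanti : AntitoneOn G (Set.Icc 0 t) := by
        apply antitoneOn_of_deriv_nonpos (convex_Icc 0 t)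
        · apply ContinuousOn.sub (hWC.mono Set.Icc_subset_Ici_self)
          have hInt : MeasureTheory.IntegrableOn φ (Set.uIcc 0 t) MeasureTheory.volume := by
            rw [Set.uIcc_of_le ht]
            exact (hφC.mono Set.Icc_subset_Ici_self).integrableOn_Icc
          have := intervalIntegral.continuousOn_primitive_interval hInt
          rw [Set.uIcc_of_le ht] at this
          exact this
        · rw [interior_Icc]
          intro s hs
          exact (hGd s hs).differentiableAt.differentiableWithinAt
        · rw [interior_Icc]
          intro s hs
          rw [(hGd s hs).deriv]
          have := hWle s hs.1.le
          linarith
      have := hGanti (Set.left_mem_Icc.mpr ht) (Set.right_mem_Icc.mpr ht) ht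
      simp only [hGdef, intervalIntegral.integral_same] at this
      linarith
  -- split the integral of φ
  have hSI := hII Sfun hSC t ht
  have hAI := hII Afun hAC t ht
  have hBI := hII Bfun hBC t ht
  have hφsplit : (∫ s in (0:ℝ)..t, φ s)
      = (-K) * (∫ s in (0:ℝ)..t, Sfun s)
        + (Γ₁ * (∫ s in (0:ℝ)..t, Afun s) + Γ₂ * (∫ s in (0:ℝ)..t, Bfun s)) := by
    rw [hφdef]
    rw [intervalIntegral.integral_add (hSI.const_mul _) ((hAI.const_mul _).add (hBI.const_mul _)),
      intervalIntegral.integral_add (hAI.const_mul _) (hBI.const_mul _),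
      intervalIntegral.integral_const_mul, intervalIntegral.integral_const_mul,
      intervalIntegral.integral_const_mul]
  -- positivity
  have hWt0 : 0 ≤ Wfun t :=
    Finset.sum_nonneg fun j hj => hV0 _ (hxD (j + 1)
      (by have := Finset.mem_range.mp hj; omega) t ht)
  have hIA0 : 0 ≤ ∫ s in (0:ℝ)..t, Afun s :=
    intervalIntegral.integral_nonneg ht fun s hs => by positivity
  have hIB0 : 0 ≤ ∫ s in (0:ℝ)..t, Bfun s :=
    intervalIntegral.integral_nonneg ht fun s hs => by positivity
  have hW00 : 0 ≤ Wfun 0 :=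
    Finset.sum_nonneg fun j hj => hV0 _ (hxD (j + 1)
      (by have := Finset.mem_range.mp hj; omega) 0 le_rfl)
  -- K ∫ S ≤ W0 + Γ₁ ∫A + Γ₂ ∫B
  have hKS : K * (∫ s in (0:ℝ)..t, Sfun s) ≤
      Wfun 0 + (Γ₁ * (∫ s in (0:ℝ)..t, Afun s) + Γ₂ * (∫ s in (0:ℝ)..t, Bfun s)) := by
    rw [hφsplit] at hmain
    linarith
  -- ∫ aᵢ ≤ ∫ S
  have hiI : IntervalIntegrable (fun s => ‖h (x (i' + 1) s)‖ ^ p) MeasureTheory.volume 0 t :=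
    hII _ (haC (i' + 1) (by omega)) t ht
  have hiS : (∫ s in (0:ℝ)..t, ‖h (x (i' + 1) s)‖ ^ p) ≤ ∫ s in (0:ℝ)..t, Sfun s := by
    apply intervalIntegral.integral_mono_on ht hiI hSI
    intro s hs
    exact Finset.single_le_sum (f := fun j => ‖h (x (j + 1) s)‖ ^ p)
      (fun j hj => by positivity) (Finset.mem_range.mpr (by omega))
  have hIi0 : 0 ≤ ∫ s in (0:ℝ)..t, ‖h (x (i' + 1) s)‖ ^ p :=
    intervalIntegral.integral_nonneg ht fun s hs => by positivity
  -- W0 equals the sum of V(ξ j)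
  have hW0eq : Wfun 0 = ∑ j ∈ Finset.Icc 1 (mN + 1), V (ξ j) := by
    show (∑ j ∈ Finset.range (mN + 1), V (x (j + 1) 0)) = _
    have : ∀ j ∈ Finset.range (mN + 1), V (x (j + 1) 0) = V (ξ (j + 1)) := by
      intro j hj
      have hjm : j < mN + 1 := Finset.mem_range.mp hj
      rw [(hsol (j + 1) (by omega) (by omega)).2.1]
    rw [Finset.sum_congr rfl this, ← Finset.Ico_add_one_right_eq_Icc, Finset.sum_Ico_eq_sum_range]
    simp [add_comm]
  -- final rpow estimates
  set q : ℝ := 1 / p with hqdef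
  have hq0 : 0 < q := by positivity
  have hq1 : q ≤ 1 := by
    rw [hqdef]
    rw [div_le_one hp0]
    exact hp
  set IA := ∫ s in (0:ℝ)..t, Afun s with hIAdef
  set IB := ∫ s in (0:ℝ)..t, Bfun s with hIBdef
  set Ii := ∫ s in (0:ℝ)..t, ‖h (x (i' + 1) s)‖ ^ p with hIidef
  have hbound : Ii ≤ Γ₁ * IA / K + (Γ₂ * IB / K + Wfun 0 / K) := by
    have : K * Ii ≤ Wfun 0 + (Γ₁ * IA + Γ₂ * IB) := le_trans (by nlinarith) hKS
    rw [← add_div, ← add_div, le_div_iff₀ hK]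
    linarith
  have hstep : Ii ^ q ≤ (Γ₁ * IA / K) ^ q + ((Γ₂ * IB / K) ^ q + (Wfun 0 / K) ^ q) := by
    have h1 : Ii ^ q ≤ (Γ₁ * IA / K + (Γ₂ * IB / K + Wfun 0 / K)) ^ q :=
      Real.rpow_le_rpow hIi0 hbound hq0.le
    have h2 : (Γ₁ * IA / K + (Γ₂ * IB / K + Wfun 0 / K)) ^ q
        ≤ (Γ₁ * IA / K) ^ q + (Γ₂ * IB / K + Wfun 0 / K) ^ q :=
      aux_rpow_add_le (by positivity) (by positivity) hq0.le hq1
    have h3 : (Γ₂ * IB / K + Wfun 0 / K) ^ q ≤ (Γ₂ * IB / K) ^ q + (Wfun 0 / K) ^ q :=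
      aux_rpow_add_le (by positivity) (by positivity) hq0.le hq1
    linarith
  have e1 : (Γ₁ * IA / K) ^ q = (Γ₁ / K) ^ q * IA ^ q := by
    rw [show Γ₁ * IA / K = (Γ₁ / K) * IA by ring, Real.mul_rpow (by positivity) hIA0]
  have e2 : (Γ₂ * IB / K) ^ q = (Γ₂ / K) ^ q * IB ^ q := by
    rw [show Γ₂ * IB / K = (Γ₂ / K) * IB by ring, Real.mul_rpow (by positivity) hIB0]
  rw [e1, e2, hW0eq] at hstep
  simp only [lpNorm]
  calc (∫ s in (0:ℝ)..t, ‖h (x (i' + 1) s)‖ ^ p) ^ (1 / p) = Ii ^ q := rfl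
    _ ≤ (Γ₁ / K) ^ q * IA ^ q + ((Γ₂ / K) ^ q * IB ^ q
          + ((∑ j ∈ Finset.Icc 1 (mN + 1), V (ξ j)) / K) ^ q) := hstep
    _ = (Γ₁ / K) ^ (1/p) * (∫ s in (0:ℝ)..t, ‖h (u s)‖ ^ p) ^ (1/p)
          + (Γ₂ / K) ^ (1/p) * (∫ s in (0:ℝ)..t, ‖h (w s)‖ ^ p) ^ (1/p)
          + ((∑ j ∈ Finset.Icc 1 (mN + 1), V (ξ j)) / K) ^ (1/p) := by
        rw [hIAdef, hIBdef, hAdef, hBdef]; ring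
end

section
/- Let k > 0 and a, b ∈ ℝ satisfy at least one of: (i) ab ≤ −a²; (ii) −a² < ab < a² and |a + b| < k; (iii) ab ≥ a² and 2·√|ab| < k. Then there exists a constant K > 0 depending only on a, b, k such that for every n ∈ ℕ there exists a constant C_n ≥ 0 with the following property: for every continuous input u : [0,∞) → ℝ, every ξ = (ξ_1,…,ξ_n) ∈ ℝ^n, and every solution (x_1,…,x_n) of the linear string x_i'(t) = a·x_{i−1}(t) − k·x_i(t) + b·x_{i+1}(t) (with x_0 := u, x_{n+1} := 0) and x_i(0) = ξ_i, one has ‖x_i‖_{[0,t],2} ≤ K·‖u‖_{[0,t],2} + C_n·(Σ_{j=1}^{n} ξ_j²)^{1/2} for all t ≥ 0 and all i = 1,…,n. -/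
/-- The `L²` norm of a real-valued signal on the interval `[0, t]`. -/
noncomputable def l2Norm (y : ℝ → ℝ) (t : ℝ) : ℝ :=
  Real.sqrt (∫ s in (0:ℝ)..t, (y s) ^ 2)

lemma sqrt_add_le' (A B : ℝ) (hA : 0 ≤ A) (hB : 0 ≤ B) :
    Real.sqrt (A + B) ≤ Real.sqrt A + Real.sqrt B := by
  have h1 : A + B ≤ (Real.sqrt A + Real.sqrt B) ^ 2 := by
    have := Real.sq_sqrt hA
    have := Real.sq_sqrt hB
    nlinarith [Real.sqrt_nonneg A, Real.sqrt_nonneg B]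
  calc Real.sqrt (A + B) ≤ Real.sqrt ((Real.sqrt A + Real.sqrt B) ^ 2) := Real.sqrt_le_sqrt h1
    _ = Real.sqrt A + Real.sqrt B := by rw [Real.sqrt_sq (by positivity)]
open Finset in
lemma sum_shift_aux (f : ℕ → ℝ) (n : ℕ) :
    (∑ i ∈ Finset.Icc 1 n, f (i - 1)) + f n = f 0 + ∑ i ∈ Finset.Icc 1 n, f i := by
  induction n with
  | zero => simp
  | succ n ih =>
      rw [Finset.sum_Icc_succ_top (by omega : 1 ≤ n + 1),
        Finset.sum_Icc_succ_top (by omega : 1 ≤ n + 1)]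
      simp only [Nat.add_sub_cancel]
      linarith

open Finset in
lemma sum_shift_mul (z : ℕ → ℝ) (n : ℕ) :
    ∑ i ∈ Finset.Icc 1 n, z i * z (i + 1) =
      (∑ i ∈ Finset.Icc 1 n, z (i - 1) * z i) + z n * z (n + 1) - z 0 * z 1 := by
  induction n with
  | zero => simp
  | succ n ih =>
      rw [Finset.sum_Icc_succ_top (by omega : 1 ≤ n + 1),
        Finset.sum_Icc_succ_top (by omega : 1 ≤ n + 1)]
      simp only [Nat.add_sub_cancel]
      linarith

lemma key_alg (n : ℕ) (k a b δ r : ℝ) (hr : 1 ≤ r) (hδ : 0 < δ)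
    (hq : |a * r ^ 2 + b| ≤ (k - δ) * r) (y : ℕ → ℝ) (hy : y (n + 1) = 0) :
    ∑ i ∈ Finset.Icc 1 n, 2 * (r ^ 2) ^ i * y i * (a * y (i - 1) - k * y i + b * y (i + 1))
      ≤ -δ * (∑ i ∈ Finset.Icc 1 n, (r ^ 2) ^ i * y i ^ 2)
        + (k + b ^ 2 / (δ * r ^ 2)) * y 0 ^ 2 := by
  have hr0 : (0:ℝ) < r := lt_of_lt_of_le one_pos hr
  set z : ℕ → ℝ := fun i => r ^ i * y i with hz
  have hz0 : z 0 = y 0 := by simp [hz]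
  have hzn1 : z (n + 1) = 0 := by simp [hz, hy]
  set S : ℝ := ∑ i ∈ Finset.Icc 1 n, z i ^ 2 with hS
  set P : ℝ := ∑ i ∈ Finset.Icc 1 n, z (i - 1) * z i with hP
  have hSy : S = ∑ i ∈ Finset.Icc 1 n, (r ^ 2) ^ i * y i ^ 2 := by
    refine Finset.sum_congr rfl fun i _ => ?_
    simp [hz, mul_pow, ← pow_mul, Nat.mul_comm]
  have hSnn : 0 ≤ S := Finset.sum_nonneg fun i _ => sq_nonneg _
  -- rewrite the LHS
  have hLHS : ∑ i ∈ Finset.Icc 1 n, 2 * (r ^ 2) ^ i * y i * (a * y (i - 1) - k * y i + b * y (i + 1))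
      = 2 * (a * r + b / r) * P - 2 * k * S - 2 * (b / r) * (z 0 * z 1) := by
    have hterm : ∀ i ∈ Finset.Icc 1 n,
        2 * (r ^ 2) ^ i * y i * (a * y (i - 1) - k * y i + b * y (i + 1))
          = 2 * a * r * (z (i - 1) * z i) - 2 * k * z i ^ 2 + 2 * (b / r) * (z i * z (i + 1)) := by
      intro i hi
      have h1i := (Finset.mem_Icc.mp hi).1
      obtain ⟨j, rfl⟩ : ∃ j, i = j + 1 := ⟨i - 1, by omega⟩
      simp only [hz, Nat.add_sub_cancel]
      field_simp
      ring
    rw [Finset.sum_congr rfl hterm, Finset.sum_add_distrib, Finset.sum_sub_distrib,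
      ← Finset.mul_sum, ← Finset.mul_sum, ← Finset.mul_sum, sum_shift_mul z n, hzn1]
    ring
  rw [hLHS, ← hSy]
  -- bound |2P|
  have habs2P : |2 * P| ≤ z 0 ^ 2 + 2 * S := by
    have h1 : ∀ i ∈ Finset.Icc 1 n, 2 * (z (i - 1) * z i) ≤ z (i - 1) ^ 2 + z i ^ 2 := by
      intro i _; nlinarith [sq_nonneg (z (i-1) - z i)]
    have h2 : ∀ i ∈ Finset.Icc 1 n, -(z (i - 1) ^ 2 + z i ^ 2) ≤ 2 * (z (i - 1) * z i) := by
      intro i _; nlinarith [sq_nonneg (z (i-1) + z i)]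
    have hshift : (∑ i ∈ Finset.Icc 1 n, z (i - 1) ^ 2) ≤ z 0 ^ 2 + S := by
      have := sum_shift_aux (fun i => z i ^ 2) n
      nlinarith [sq_nonneg (z n)]
    have hup : 2 * P ≤ z 0 ^ 2 + 2 * S := by
      have := Finset.sum_le_sum h1
      rw [Finset.sum_add_distrib] at this
      rw [hP, ← Finset.mul_sum] at *
      linarith
    have hlo : -(z 0 ^ 2 + 2 * S) ≤ 2 * P := by
      have := Finset.sum_le_sum h2
      rw [Finset.sum_neg_distrib, Finset.sum_add_distrib] at this
      rw [hP, ← Finset.mul_sum] at *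
      linarith
    rw [abs_le]; constructor <;> linarith
  have hq' : |a * r + b / r| ≤ k - δ := by
    have : a * r + b / r = (a * r ^ 2 + b) / r := by field_simp
    rw [this, abs_div, abs_of_pos hr0, div_le_iff₀ hr0]
    exact hq
  have hkd : 0 ≤ k - δ := le_trans (abs_nonneg _) hq'
  have hmain : 2 * (a * r + b / r) * P ≤ (k - δ) * (z 0 ^ 2 + 2 * S) := by
    calc 2 * (a * r + b / r) * P = (a * r + b / r) * (2 * P) := by ring
      _ ≤ |(a * r + b / r) * (2 * P)| := le_abs_self _
      _ = |a * r + b / r| * |2 * P| := abs_mul _ _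
      _ ≤ (k - δ) * (z 0 ^ 2 + 2 * S) :=
          mul_le_mul hq' habs2P (abs_nonneg _) hkd
  have hz1S : z 1 ^ 2 ≤ S := by
    rcases Nat.eq_zero_or_pos n with hn | hn
    · subst hn
      have : z 1 = 0 := by simpa using hzn1
      simp [this, hSnn]
    · exact Finset.single_le_sum (f := fun i => z i ^ 2) (fun i _ => sq_nonneg _)
        (Finset.mem_Icc.mpr ⟨le_refl 1, hn⟩)
  have hcross : -(2 * (b / r) * (z 0 * z 1)) ≤ δ * S + b ^ 2 / (δ * r ^ 2) * z 0 ^ 2 := by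
    have h1 : -(2 * (b / r) * (z 0 * z 1)) ≤ δ * z 1 ^ 2 + b ^ 2 / (δ * r ^ 2) * z 0 ^ 2 := by
      have key : δ * z 1 ^ 2 + b ^ 2 / (δ * r ^ 2) * z 0 ^ 2 + 2 * (b / r) * (z 0 * z 1)
          = (δ * r * z 1 + b * z 0) ^ 2 / (δ * r ^ 2) := by
        field_simp
        ring
      have h2 : (0:ℝ) ≤ (δ * r * z 1 + b * z 0) ^ 2 / (δ * r ^ 2) := by positivity
      rw [← key] at h2
      linarith
    nlinarith [mul_le_mul_of_nonneg_left hz1S hδ.le]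
  rw [hz0] at *
  nlinarith [sq_nonneg (y 0)]
lemma exists_r (k a b : ℝ) (hk : 0 < k)
    (hcond : (a * b ≤ -a ^ 2) ∨
      (-a ^ 2 < a * b ∧ a * b < a ^ 2 ∧ |a + b| < k) ∨
      (a ^ 2 ≤ a * b ∧ 2 * Real.sqrt |a * b| < k)) :
    ∃ r : ℝ, 1 ≤ r ∧ |a * r ^ 2 + b| < k * r := by
  by_cases ha : a = 0
  · subst ha
    refine ⟨max 1 ((|b| + 1) / k), le_max_left _ _, ?_⟩
    have h1 : (|b| + 1) / k ≤ max 1 ((|b| + 1) / k) := le_max_right _ _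
    have h2 : |b| + 1 ≤ k * max 1 ((|b| + 1) / k) := by
      rw [← div_le_iff₀' hk]
      exact h1
    simpa using lt_of_lt_of_le (by linarith : |b| < |b| + 1) h2
  · have ha2 : (0:ℝ) < a ^ 2 := by positivity
    rcases hcond with h | ⟨_, _, h⟩ | ⟨h1, h2⟩
    · set μ : ℝ := -b / a with hμ
      have hμa : μ * a ^ 2 = -(a * b) := by field_simp [hμ]; rw [hμ]; exact div_mul_cancel₀ _ ha
      have hμ1 : 1 ≤ μ := by nlinarith
      refine ⟨Real.sqrt μ, ?_, ?_⟩
      · have := Real.sqrt_le_sqrt hμ1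
        rwa [Real.sqrt_one] at this
      · have hsq : Real.sqrt μ ^ 2 = μ := Real.sq_sqrt (by linarith)
        rw [hsq]
        have hz : a * μ + b = 0 := by field_simp [hμ]; linear_combination (div_mul_cancel₀ (-b) ha) + a * hμ
        rw [hz, abs_zero]
        have h1r : (1:ℝ) ≤ Real.sqrt μ := by
          have := Real.sqrt_le_sqrt hμ1; rwa [Real.sqrt_one] at this
        nlinarith
    · exact ⟨1, le_refl 1, by simpa using h⟩
    · set μ : ℝ := b / a with hμ
      have hμa : μ * a ^ 2 = a * b := by field_simp [hμ]; rw [hμ]; exact div_mul_cancel₀ _ ha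
      have hμ1 : 1 ≤ μ := by nlinarith
      have hab0 : 0 ≤ a * b := by nlinarith
      have h1r : (1:ℝ) ≤ Real.sqrt μ := by
        have := Real.sqrt_le_sqrt hμ1; rwa [Real.sqrt_one] at this
      have hr0 : (0:ℝ) < Real.sqrt μ := lt_of_lt_of_le one_pos h1r
      refine ⟨Real.sqrt μ, h1r, ?_⟩
      have hsq : Real.sqrt μ ^ 2 = μ := Real.sq_sqrt (by linarith)
      rw [hsq]
      have hval : a * μ + b = 2 * b := by field_simp [hμ]; linear_combination (div_mul_cancel₀ b ha) + a * hμ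
      rw [hval]
      have habs : |a * b| = a * b := abs_of_nonneg hab0
      rw [habs] at h2
      have hmul : Real.sqrt (a * b) * Real.sqrt μ = |b| := by
        rw [← Real.sqrt_mul hab0]
        have hbb : a * b * μ = b ^ 2 := by field_simp [hμ]; linear_combination b * (div_mul_cancel₀ b ha) + a * b * hμ
        rw [hbb, Real.sqrt_sq_eq_abs]
      have hlt : 2 * Real.sqrt (a * b) * Real.sqrt μ < k * Real.sqrt μ :=
        mul_lt_mul_of_pos_right h2 hr0
      rw [mul_assoc, hmul] at hlt
      calc |2 * b| = 2 * |b| := by rw [abs_mul, abs_two]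
        _ < k * Real.sqrt μ := hlt

/-- Example 1 (Lyapunov-based one-sided condition (4.8)): the linear string
`ẋᵢ = a x_{i−1} − k xᵢ + b x_{i+1}` with zero downstream input is `L²`
one-sided string stable when `ab ≤ −a²`, or `−a² < ab < a²` and `|a + b| < k`,
or `ab ≥ a²` and `2√|ab| < k`. -/
theorem linear_string_lyapunov_one_sided (k a b : ℝ) (hk : 0 < k)
    (hcond : (a * b ≤ -a ^ 2) ∨
      (-a ^ 2 < a * b ∧ a * b < a ^ 2 ∧ |a + b| < k) ∨
      (a ^ 2 ≤ a * b ∧ 2 * Real.sqrt |a * b| < k)) :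
    ∃ K : ℝ, 0 < K ∧ ∀ n : ℕ, ∃ C : ℝ, 0 ≤ C ∧
      ∀ u : ℝ → ℝ, ContinuousOn u (Set.Ici 0) →
      ∀ ξ : ℕ → ℝ, ∀ x : ℕ → ℝ → ℝ,
        (∀ t, x 0 t = u t) → (∀ t, x (n + 1) t = 0) →
        (∀ i, 1 ≤ i → i ≤ n → x i 0 = ξ i ∧
          ∀ t ≥ (0:ℝ), HasDerivAt (x i)
            (a * x (i - 1) t - k * x i t + b * x (i + 1) t) t) →
        ∀ i, 1 ≤ i → i ≤ n → ∀ t ≥ (0:ℝ),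
          l2Norm (x i) t ≤
            K * l2Norm u t + C * Real.sqrt (∑ j ∈ Finset.Icc 1 n, (ξ j) ^ 2) := by
  obtain ⟨r, hr1, hrk⟩ := exists_r k a b hk hcond
  have hr0 : (0:ℝ) < r := lt_of_lt_of_le one_pos hr1
  set c : ℝ := |a * r ^ 2 + b| with hc
  set δ : ℝ := (k * r - c) / r with hδdef
  have hδ : 0 < δ := div_pos (by linarith [hrk]) hr0
  have hq : c ≤ (k - δ) * r := by
    have h1 : δ * r = k * r - c := div_mul_cancel₀ _ hr0.ne'
    nlinarith
  set M : ℝ := k + b ^ 2 / (δ * r ^ 2) with hM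
  have hM0 : 0 < M := by
    have : 0 ≤ b ^ 2 / (δ * r ^ 2) := by positivity
    rw [hM]; linarith
  have hr2 : (1:ℝ) ≤ r ^ 2 := by nlinarith
  refine ⟨Real.sqrt (M / δ) + 1, by positivity, fun n => ?_⟩
  refine ⟨Real.sqrt ((r ^ 2) ^ n / δ), Real.sqrt_nonneg _, ?_⟩
  intro u hu ξ x hx0 hxn1 hxi i h1i hin t ht
  set Ξ : ℝ := ∑ j ∈ Finset.Icc 1 n, (ξ j) ^ 2 with hΞ
  have hΞ0 : 0 ≤ Ξ := Finset.sum_nonneg fun j _ => sq_nonneg _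
  set V : ℝ → ℝ := fun s => ∑ j ∈ Finset.Icc 1 n, (r ^ 2) ^ j * (x j s) ^ 2 with hV
  set V' : ℝ → ℝ := fun s => ∑ j ∈ Finset.Icc 1 n,
      2 * (r ^ 2) ^ j * x j s * (a * x (j - 1) s - k * x j s + b * x (j + 1) s) with hV'
  have hVnn : ∀ s, 0 ≤ V s := fun s => Finset.sum_nonneg fun j _ => by positivity
  have hxderiv : ∀ j, 1 ≤ j → j ≤ n → ∀ s, (0:ℝ) ≤ s →
      HasDerivAt (x j) (a * x (j - 1) s - k * x j s + b * x (j + 1) s) s :=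
    fun j hj1 hj2 s hs => (hxi j hj1 hj2).2 s hs
  have hVd : ∀ s, (0:ℝ) ≤ s → HasDerivAt V (V' s) s := by
    intro s hs
    refine HasDerivAt.fun_sum fun j hj => ?_
    have hj' := Finset.mem_Icc.mp hj
    have hd := hxderiv j hj'.1 hj'.2 s hs
    have h2 := (hd.fun_pow 2).const_mul ((r ^ 2) ^ j)
    convert h2 using 1
    · rfl
    push_cast
    ring
  have hVca : ∀ s, (0:ℝ) ≤ s → ContinuousAt V s := fun s hs => (hVd s hs).continuousAt
  have hVco : ∀ s, (0:ℝ) ≤ s → ContinuousOn V (Set.Icc 0 s) :=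
    fun s _ τ hτ => (hVca τ hτ.1).continuousWithinAt
  have hVint : IntervalIntegrable V MeasureTheory.volume 0 t :=
    (hVco t ht).intervalIntegrable_of_Icc ht
  have huco : ContinuousOn (fun τ => (u τ) ^ 2) (Set.Icc 0 t) :=
    (hu.mono Set.Icc_subset_Ici_self).pow 2
  have huint : IntervalIntegrable (fun τ => (u τ) ^ 2) MeasureTheory.volume 0 t :=
    huco.intervalIntegrable_of_Icc ht
  set F : ℝ → ℝ := fun s =>
    V s + δ * (∫ τ in (0:ℝ)..s, V τ) - M * (∫ τ in (0:ℝ)..s, (u τ) ^ 2) with hF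
  have hFd : ∀ s ∈ Set.Ioo (0:ℝ) t, HasDerivAt F (V' s + δ * V s - M * (u s) ^ 2) s := by
    intro s hs
    have hs0 : (0:ℝ) < s := hs.1
    have hV1 : HasDerivAt V (V' s) s := hVd s hs0.le
    have hVint' : IntervalIntegrable V MeasureTheory.volume 0 s :=
      (hVco s hs0.le).intervalIntegrable_of_Icc hs0.le
    have hmeasV : StronglyMeasurableAtFilter V (nhds s) MeasureTheory.volume :=
      ContinuousAt.stronglyMeasurableAtFilter isOpen_Ioi
        (fun τ hτ => hVca τ (le_of_lt hτ)) s hs0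
    have hV2 : HasDerivAt (fun w => ∫ τ in (0:ℝ)..w, V τ) (V s) s :=
      intervalIntegral.integral_hasDerivAt_right hVint' hmeasV (hVca s hs0.le)
    have huca : ContinuousAt (fun τ => (u τ) ^ 2) s :=
      (hu.continuousAt (Ici_mem_nhds hs0)).pow 2
    have huint' : IntervalIntegrable (fun τ => (u τ) ^ 2) MeasureTheory.volume 0 s :=
      (huco.mono (Set.Icc_subset_Icc_right hs.2.le)).intervalIntegrable_of_Icc hs0.le
    have hmeasu : StronglyMeasurableAtFilter (fun τ => (u τ) ^ 2) (nhds s) MeasureTheory.volume :=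
      ContinuousAt.stronglyMeasurableAtFilter isOpen_Ioi
        (fun τ hτ => (hu.continuousAt (Ici_mem_nhds hτ)).pow 2) s hs0
    have hu2 : HasDerivAt (fun w => ∫ τ in (0:ℝ)..w, (u τ) ^ 2) ((u s) ^ 2) s :=
      intervalIntegral.integral_hasDerivAt_right huint' hmeasu huca
    exact (hV1.add (hV2.const_mul δ)).sub (hu2.const_mul M)
  have hFanti : AntitoneOn F (Set.Icc 0 t) := by
    apply antitoneOn_of_deriv_nonpos (convex_Icc 0 t)
    · refine ContinuousOn.sub (ContinuousOn.add (hVco t ht) ?_) ?_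
      · refine continuousOn_const.mul ?_
        have h := intervalIntegral.continuousOn_primitive_interval'
          (μ := MeasureTheory.volume) hVint (Set.left_mem_uIcc)
        rwa [Set.uIcc_of_le ht] at h
      · refine continuousOn_const.mul ?_
        have h := intervalIntegral.continuousOn_primitive_interval'
          (μ := MeasureTheory.volume) huint (Set.left_mem_uIcc)
        rwa [Set.uIcc_of_le ht] at h
    · rw [interior_Icc]
      exact fun s hs => (hFd s hs).differentiableAt.differentiableWithinAt
    · rw [interior_Icc]
      intro s hs
      rw [(hFd s hs).deriv]
      have hkey := key_alg n k a b δ r hr1 hδ hq (fun j => x j s)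
        (by simpa using hxn1 s)
      rw [hx0 s] at hkey
      have hVs : V s = ∑ j ∈ Finset.Icc 1 n, (r ^ 2) ^ j * (x j s) ^ 2 := rfl
      have hV's : V' s = ∑ j ∈ Finset.Icc 1 n,
          2 * (r ^ 2) ^ j * x j s * (a * x (j - 1) s - k * x j s + b * x (j + 1) s) := rfl
      rw [hVs, hV's, hM]
      linarith [hkey]
  have hFt : F t ≤ F 0 :=
    hFanti (Set.left_mem_Icc.mpr ht) (Set.right_mem_Icc.mpr ht) ht
  have hF0 : F 0 = V 0 := by simp [hF]
  have hineq : δ * (∫ τ in (0:ℝ)..t, V τ) ≤ V 0 + M * (∫ τ in (0:ℝ)..t, (u τ) ^ 2) := by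
    have hVt := hVnn t
    rw [hF0] at hFt
    have hFt' : V t + δ * (∫ τ in (0:ℝ)..t, V τ) - M * (∫ τ in (0:ℝ)..t, (u τ) ^ 2) ≤ V 0 := hFt
    linarith
  have hxico : ContinuousOn (fun τ => (x i τ) ^ 2) (Set.Icc 0 t) :=
    fun τ hτ => (((hxderiv i h1i hin τ hτ.1).continuousAt).pow 2).continuousWithinAt
  have hxiint : IntervalIntegrable (fun τ => (x i τ) ^ 2) MeasureTheory.volume 0 t :=
    hxico.intervalIntegrable_of_Icc ht
  have hptwise : ∀ τ ∈ Set.Icc (0:ℝ) t, (x i τ) ^ 2 ≤ V τ := by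
    intro τ hτ
    have hp1 : (1:ℝ) ≤ (r ^ 2) ^ i := one_le_pow₀ hr2
    have h1 : (x i τ) ^ 2 ≤ (r ^ 2) ^ i * (x i τ) ^ 2 :=
      le_mul_of_one_le_left (sq_nonneg _) hp1
    have h2 : (r ^ 2) ^ i * (x i τ) ^ 2 ≤ V τ :=
      Finset.single_le_sum (f := fun j => (r ^ 2) ^ j * (x j τ) ^ 2)
        (fun j _ => by positivity) (Finset.mem_Icc.mpr ⟨h1i, hin⟩)
    linarith
  have hmono : (∫ τ in (0:ℝ)..t, (x i τ) ^ 2) ≤ ∫ τ in (0:ℝ)..t, V τ :=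
    intervalIntegral.integral_mono_on ht hxiint hVint hptwise
  have hV0 : V 0 ≤ (r ^ 2) ^ n * Ξ := by
    rw [hV, hΞ, Finset.mul_sum]
    apply Finset.sum_le_sum
    intro j hj
    have hj' := Finset.mem_Icc.mp hj
    rw [(hxi j hj'.1 hj'.2).1]
    have hpow : (r ^ 2) ^ j ≤ (r ^ 2) ^ n := pow_le_pow_right₀ hr2 hj'.2
    exact mul_le_mul_of_nonneg_right hpow (sq_nonneg _)
  have hIu : 0 ≤ ∫ τ in (0:ℝ)..t, (u τ) ^ 2 :=
    intervalIntegral.integral_nonneg ht fun τ _ => sq_nonneg _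
  have hfinal : (∫ τ in (0:ℝ)..t, (x i τ) ^ 2) ≤
      M / δ * (∫ τ in (0:ℝ)..t, (u τ) ^ 2) + (r ^ 2) ^ n / δ * Ξ := by
    rw [div_mul_eq_mul_div, div_mul_eq_mul_div, ← add_div, le_div_iff₀ hδ]
    nlinarith [mul_le_mul_of_nonneg_right hmono hδ.le]
  have hA : 0 ≤ M / δ * (∫ τ in (0:ℝ)..t, (u τ) ^ 2) :=
    mul_nonneg (by positivity) hIu
  have hB : 0 ≤ (r ^ 2) ^ n / δ * Ξ := mul_nonneg (by positivity) hΞ0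
  have hsqrt : Real.sqrt (∫ τ in (0:ℝ)..t, (x i τ) ^ 2) ≤
      Real.sqrt (M / δ * (∫ τ in (0:ℝ)..t, (u τ) ^ 2)) +
      Real.sqrt ((r ^ 2) ^ n / δ * Ξ) :=
    le_trans (Real.sqrt_le_sqrt hfinal) (sqrt_add_le' _ _ hA hB)
  have e1 : Real.sqrt (M / δ * (∫ τ in (0:ℝ)..t, (u τ) ^ 2))
      = Real.sqrt (M / δ) * Real.sqrt (∫ τ in (0:ℝ)..t, (u τ) ^ 2) :=
    Real.sqrt_mul (by positivity) _
  have e2 : Real.sqrt ((r ^ 2) ^ n / δ * Ξ)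
      = Real.sqrt ((r ^ 2) ^ n / δ) * Real.sqrt Ξ :=
    Real.sqrt_mul (by positivity) _
  have hl2u : l2Norm u t = Real.sqrt (∫ τ in (0:ℝ)..t, (u τ) ^ 2) := rfl
  have hl2x : l2Norm (x i) t = Real.sqrt (∫ τ in (0:ℝ)..t, (x i τ) ^ 2) := rfl
  rw [hl2x, hl2u]
  rw [e1, e2] at hsqrt
  have hunn : 0 ≤ Real.sqrt (∫ τ in (0:ℝ)..t, (u τ) ^ 2) := Real.sqrt_nonneg _
  nlinarith [hsqrt]
end
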